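/- Let F be a field, p ∈ F nonzero and not a root of unity, λ, ρ₀ ∈ F, and ρ(z) ∈ F[[z]] a formal power series with constant term ρ₀. If a formal power series g(z) ∈ F[[z]] satisfies λ·g(pz) = ρ(z)·g(z) (where g(pz) denotes the series Σ g_n p^n z^n), and λ p^n ≠ ρ₀ for every n ≥ 0, then g = 0. -/

import Mathlib

/-- If a formal power series `g` over a field satisfies `λ·g(pz) = ρ(z)·g(z)` with
`ρ(0) = ρ₀`, `p` nonzero and not a root of unity, and `λ p^n ≠ ρ₀` for all `n ≥ 0`,
then `g = 0`. -/
theorem qdiff_power_series_unique {F : Type*} [Field F] (p lam ρ₀ : F) (hp : p ≠ 0)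
    (hroot : ∀ n : ℕ, 0 < n → p ^ n ≠ 1)
    (ρ g : PowerSeries F) (h0 : PowerSeries.constantCoeff ρ = ρ₀)
    (heq : lam • PowerSeries.rescale p g = ρ * g)
    (hne : ∀ n : ℕ, lam * p ^ n ≠ ρ₀) :
    g = 0 := by
  ext n
  induction n using Nat.strong_induction_on with
  | _ n ih =>
    have h := congrArg (PowerSeries.coeff n) heq
    rw [map_smul, PowerSeries.coeff_rescale, PowerSeries.coeff_mul,
      Finset.sum_eq_single (0, n)] at h
    · have h0' : PowerSeries.coeff 0 ρ = ρ₀ := by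
        simpa [PowerSeries.coeff_zero_eq_constantCoeff] using h0
      rw [h0'] at h
      have : (lam * p ^ n - ρ₀) * PowerSeries.coeff n g = 0 := by
        rw [sub_mul]
        rw [smul_eq_mul] at h
        linear_combination h
      rcases mul_eq_zero.mp this with h1 | h2
      · exact absurd (sub_eq_zero.mp h1) (hne n)
      · simpa using h2
    · rintro ⟨i, j⟩ hb hbne
      have hij : i + j = n := Finset.HasAntidiagonal.mem_antidiagonal.mp hb
      have hj : j < n := by
        rcases Nat.lt_or_ge j n with h | h
        · exact h
        · exfalso; apply hbne
          have : j = n := le_antisymm (hij ▸ Nat.le_add_left j i) h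
          subst this
          simp at hij
          simp [hij]
      have := ih j hj
      simp only [PowerSeries.coeff_zero_eq_constantCoeff] at this ⊢
      simp [this]
    · intro hmem
      exact absurd (Finset.HasAntidiagonal.mem_antidiagonal.mpr (by simp)) hmem
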